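/- arXiv:1403.6195 — 2 statements merged into one kernel-verified Lean document; each statement's English description precedes it below -/
import Mathlib

section
/- For all ρ with -1 ≤ ρ ≤ 1, the maximum over y ∈ ℝ of |Φ(y) - Φ(y·√(1-ρ²))| is at most |ρ|/2, where Φ is the standard normal CDF. -/
open MeasureTheory Real

noncomputable def stdPhi (x : ℝ) : ℝ :=
  ∫ t in Set.Iic x, Real.exp (-t ^ 2 / 2) / Real.sqrt (2 * Real.pi)

noncomputable def g (t : ℝ) : ℝ := Real.exp (-t ^ 2 / 2)

lemma g_cont : Continuous g := by unfold g; fun_prop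

lemma g_nonneg (t : ℝ) : 0 ≤ g t := (Real.exp_pos _).le

lemma integrable_g : Integrable g := by
  have h := integrable_exp_neg_mul_sq (by norm_num : (0:ℝ) < 1/2)
  have : g = fun x => Real.exp (-(1/2) * x ^ 2) := by funext x; unfold g; ring_nf
  rw [this]; exact h

noncomputable def Ig (L : ℝ) : ℝ := ∫ t in (0:ℝ)..L, g t

lemma hasDerivAt_Ig (t : ℝ) : HasDerivAt Ig (g t) t := by
  exact intervalIntegral.integral_hasDerivAt_right
    (g_cont.intervalIntegrable _ _)
    (g_cont.stronglyMeasurableAtFilter _ _)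
    g_cont.continuousAt

lemma Ig_cont : Continuous Ig :=
  continuous_iff_continuousAt.2 fun t => (hasDerivAt_Ig t).continuousAt

lemma sq_Ig (L : ℝ) : Ig L ^ 2 = ∫ t in (0:ℝ)..L, 2 * (Ig t * g t) := by
  have h : ∀ x ∈ Set.uIcc (0:ℝ) L, HasDerivAt (fun t => Ig t ^ 2) (2 * (Ig x * g x)) x := by
    intro x _
    have := (hasDerivAt_Ig x).pow 2
    exact this.congr_deriv (by norm_num; ring)
  have := intervalIntegral.integral_eq_sub_of_hasDerivAt h
    ((continuous_const.mul (Ig_cont.mul g_cont)).intervalIntegrable _ _)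
  rw [this]
  simp [Ig]

noncomputable def F (t u : ℝ) : ℝ := 2 * t * Real.exp (-(t ^ 2 * (1 + u ^ 2)) / 2)

lemma F_cont : Continuous (Function.uncurry F) := by
  unfold Function.uncurry F; fun_prop

lemma Ig_eq_mul (t : ℝ) : Ig t = t * ∫ u in (0:ℝ)..1, g (t * u) := by
  have := intervalIntegral.mul_integral_comp_mul_left (a := (0:ℝ)) (b := 1) (c := t) (f := g)
  rw [this]; simp [Ig]

lemma step2 (t : ℝ) : 2 * (Ig t * g t) = ∫ u in (0:ℝ)..1, F t u := by
  rw [Ig_eq_mul]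
  rw [show ∀ a b : ℝ, 2 * (t * a * b) = (2 * t * b) * a from fun a b => by ring]
  rw [← intervalIntegral.integral_const_mul]
  congr 1; funext u
  unfold F g
  rw [mul_assoc, ← Real.exp_add]
  congr 1; ring

lemma F_integrableOn (L : ℝ) :
    Integrable (Function.uncurry F)
      ((volume.restrict (Set.Ioc 0 L)).prod (volume.restrict (Set.Ioc (0:ℝ) 1))) := by
  rw [Measure.prod_restrict]
  apply MeasureTheory.IntegrableOn.mono_set
    (t := Set.Icc ((0:ℝ),(0:ℝ)) (max L 0, 1))
  · exact F_cont.continuousOn.integrableOn_compact isCompact_Icc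
  · rw [← Set.Icc_prod_Icc]
    exact Set.prod_mono (Set.Ioc_subset_Icc_self.trans (Set.Icc_subset_Icc_right (le_max_left _ _)))
      Set.Ioc_subset_Icc_self

lemma swapF (L : ℝ) (hL : 0 ≤ L) :
    ∫ t in (0:ℝ)..L, (∫ u in (0:ℝ)..1, F t u) =
      ∫ u in (0:ℝ)..1, ∫ t in (0:ℝ)..L, F t u := by
  rw [intervalIntegral.integral_of_le hL, intervalIntegral.integral_of_le (by norm_num : (0:ℝ) ≤ 1)]
  simp_rw [intervalIntegral.integral_of_le hL, intervalIntegral.integral_of_le (by norm_num : (0:ℝ) ≤ 1)]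
  exact MeasureTheory.integral_integral_swap (F_integrableOn L)

lemma inner_int (u L : ℝ) :
    ∫ t in (0:ℝ)..L, F t u =
      2 / (1 + u ^ 2) * (1 - Real.exp (-(L ^ 2 * (1 + u ^ 2)) / 2)) := by
  have hu : (0:ℝ) < 1 + u ^ 2 := by positivity
  have h : ∀ t : ℝ, HasDerivAt
      (fun t => -(2 / (1 + u ^ 2)) * Real.exp (-(t ^ 2 * (1 + u ^ 2)) / 2)) (F t u) t := by
    intro t
    have h1 : HasDerivAt (fun t : ℝ => -(t ^ 2 * (1 + u ^ 2)) / 2) (-(t * (1 + u ^ 2))) t := by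
      have h2 := (((hasDerivAt_pow 2 t).mul_const (1 + u ^ 2)).div_const 2).neg
      simp only [neg_div] at *
      exact h2.congr_deriv (by norm_num; ring)
    have h3 := (h1.exp).const_mul (-(2 / (1 + u ^ 2)))
    refine h3.congr_deriv ?_
    unfold F
    field_simp
  have := intervalIntegral.integral_eq_sub_of_hasDerivAt
    (fun t _ => h t)
    ((by unfold F; fun_prop : Continuous fun t => F t u).intervalIntegrable 0 L)
  rw [this]
  simp only [ne_eq, OfNat.ofNat_ne_zero, not_false_eq_true, zero_pow, zero_mul, neg_zero,
    zero_div, Real.exp_zero, mul_one]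
  ring

lemma lemA (L : ℝ) (hL : 0 ≤ L) :
    Ig L ^ 2 ≤ π / 2 * (1 - Real.exp (-L ^ 2)) := by
  have hcont1 : Continuous fun u : ℝ =>
      2 / (1 + u ^ 2) * (1 - Real.exp (-(L ^ 2 * (1 + u ^ 2)) / 2)) := by
    apply Continuous.mul
    · exact continuous_const.div (by fun_prop) (fun x => by positivity)
    · fun_prop
  have hcont2 : Continuous fun u : ℝ => 2 / (1 + u ^ 2) * (1 - Real.exp (-L ^ 2)) := by
    apply Continuous.mul
    · exact continuous_const.div (by fun_prop) (fun x => by positivity)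
    · fun_prop
  have key : Ig L ^ 2 = ∫ u in (0:ℝ)..1,
      2 / (1 + u ^ 2) * (1 - Real.exp (-(L ^ 2 * (1 + u ^ 2)) / 2)) := by
    rw [sq_Ig]
    simp_rw [step2]
    rw [swapF L hL]
    simp_rw [inner_int]
  rw [key]
  have mono : ∫ u in (0:ℝ)..1,
      2 / (1 + u ^ 2) * (1 - Real.exp (-(L ^ 2 * (1 + u ^ 2)) / 2)) ≤
      ∫ u in (0:ℝ)..1, 2 / (1 + u ^ 2) * (1 - Real.exp (-L ^ 2)) := by
    apply intervalIntegral.integral_mono_on (by norm_num)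
      (hcont1.intervalIntegrable _ _) (hcont2.intervalIntegrable _ _)
    intro u hu
    have h1 : (0:ℝ) < 1 + u ^ 2 := by positivity
    have h2 : Real.exp (-L ^ 2) ≤ Real.exp (-(L ^ 2 * (1 + u ^ 2)) / 2) := by
      apply Real.exp_le_exp.2
      have hu2 : u ^ 2 ≤ 1 := by
        rcases hu with ⟨hu0, hu1⟩
        nlinarith
      nlinarith [sq_nonneg L]
    have h3 : (0:ℝ) ≤ 2 / (1 + u ^ 2) := by positivity
    apply mul_le_mul_of_nonneg_left _ h3
    linarith
  refine mono.trans ?_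
  have : ∀ u : ℝ, 2 / (1 + u ^ 2) * (1 - Real.exp (-L ^ 2)) =
      (2 * (1 - Real.exp (-L ^ 2))) * (1 / (1 + u ^ 2)) := by
    intro u; ring
  simp_rw [this]
  rw [intervalIntegral.integral_const_mul, integral_one_div_one_add_sq]
  rw [Real.arctan_one, Real.arctan_zero]
  have hexp : Real.exp (-L ^ 2) ≤ 1 := Real.exp_le_one_iff.2 (neg_nonpos.2 (sq_nonneg L))
  rw [sub_zero]
  nlinarith [Real.pi_pos]

lemma lemB (a b : ℝ) (ha : 0 ≤ a) (hab : a ≤ b) :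
    ∫ t in a..b, g t ≤ Real.exp (-a ^ 2 / 2) * Ig (Real.sqrt (b ^ 2 - a ^ 2)) := by
  set c := Real.sqrt (b ^ 2 - a ^ 2) with hc
  have hba : 0 ≤ b ^ 2 - a ^ 2 := by nlinarith
  have hc0 : 0 ≤ c := Real.sqrt_nonneg _
  set f : ℝ → ℝ := fun t => Real.sqrt (t ^ 2 - a ^ 2) with hf
  set f' : ℝ → ℝ := fun t => t / Real.sqrt (t ^ 2 - a ^ 2) with hf'
  have hderiv : ∀ x ∈ Set.Ioo a b, HasDerivWithinAt f (f' x) (Set.Ioo a b) x := by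
    intro x hx
    have hxa : 0 ≤ a := ha
    have hx0 : 0 < x := lt_of_le_of_lt ha hx.1
    have hxx : 0 < x ^ 2 - a ^ 2 := by nlinarith [hx.1]
    have hinner : HasDerivAt (fun t : ℝ => t ^ 2 - a ^ 2) (2 * x) x := by
      simpa using (hasDerivAt_pow 2 x).sub_const (a ^ 2)
    have houter := Real.hasDerivAt_sqrt (ne_of_gt hxx)
    have := houter.comp x hinner
    have heq : 1 / (2 * Real.sqrt (x ^ 2 - a ^ 2)) * (2 * x) = f' x := by
      rw [hf']
      have : Real.sqrt (x ^ 2 - a ^ 2) ≠ 0 := by positivity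
      field_simp
    rw [heq] at this
    exact this.hasDerivWithinAt
  have hinj : Set.InjOn f (Set.Ioo a b) := by
    intro x hx y hy hxy
    have hx0 : 0 < x := lt_of_le_of_lt ha hx.1
    have hy0 : 0 < y := lt_of_le_of_lt ha hy.1
    have hx2 : 0 ≤ x ^ 2 - a ^ 2 := by nlinarith [hx.1]
    have hy2 : 0 ≤ y ^ 2 - a ^ 2 := by nlinarith [hy.1]
    have h1 : x ^ 2 - a ^ 2 = y ^ 2 - a ^ 2 := by
      have := congrArg (fun z : ℝ => z ^ 2) hxy
      simpa [hf, Real.sq_sqrt hx2, Real.sq_sqrt hy2] using this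
    have h2 : x ^ 2 = y ^ 2 := by linarith
    calc x = Real.sqrt (x ^ 2) := (Real.sqrt_sq hx0.le).symm
      _ = Real.sqrt (y ^ 2) := by rw [h2]
      _ = y := Real.sqrt_sq hy0.le
  have himage : f '' Set.Ioo a b = Set.Ioo 0 c := by
    ext v
    constructor
    · rintro ⟨x, hx, rfl⟩
      have hx0 : 0 < x := lt_of_le_of_lt ha hx.1
      have hx2 : 0 < x ^ 2 - a ^ 2 := by nlinarith [hx.1]
      refine ⟨Real.sqrt_pos.2 hx2, ?_⟩
      rw [hc]
      apply Real.sqrt_lt_sqrt hx2.le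
      nlinarith [hx.2]
    · rintro ⟨hv0, hvc⟩
      refine ⟨Real.sqrt (v ^ 2 + a ^ 2), ⟨?_, ?_⟩, ?_⟩
      · calc a = Real.sqrt (a ^ 2) := (Real.sqrt_sq ha).symm
          _ < Real.sqrt (v ^ 2 + a ^ 2) := by
            apply Real.sqrt_lt_sqrt (by positivity)
            nlinarith
      · have hv2 : v ^ 2 < b ^ 2 - a ^ 2 := by
          have := Real.sq_sqrt hba
          nlinarith [hvc, hv0, hc0]
        calc Real.sqrt (v ^ 2 + a ^ 2) < Real.sqrt (b ^ 2) := by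
              apply Real.sqrt_lt_sqrt (by positivity)
              linarith
          _ = b := Real.sqrt_sq (ha.trans hab)
      · rw [hf]
        simp only
        rw [Real.sq_sqrt (by positivity)]
        have : v ^ 2 + a ^ 2 - a ^ 2 = v ^ 2 := by ring
        rw [this, Real.sqrt_sq hv0.le]
  have hgint : IntegrableOn g (Set.Ioo 0 c) := integrable_g.integrableOn
  have hchange : ∫ v in Set.Ioo 0 c, g v = ∫ t in Set.Ioo a b, |f' t| • g (f t) := by
    rw [← himage]
    exact MeasureTheory.integral_image_eq_integral_abs_deriv_smul measurableSet_Ioo hderiv hinj g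
  have hpullint : IntegrableOn (fun t => |f' t| • g (f t)) (Set.Ioo a b) := by
    have := (MeasureTheory.integrableOn_image_iff_integrableOn_abs_deriv_smul
      measurableSet_Ioo hderiv hinj g).1
    apply this
    rw [himage]; exact hgint
  have hpt : ∀ t ∈ Set.Ioo a b, g t ≤ Real.exp (-a ^ 2 / 2) * (|f' t| • g (f t)) := by
    intro t ht
    have ht0 : 0 < t := lt_of_le_of_lt ha ht.1
    have ht2 : 0 < t ^ 2 - a ^ 2 := by nlinarith [ht.1]
    have hgf : g (f t) = Real.exp (-(t ^ 2 - a ^ 2) / 2) := by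
      rw [hf]; unfold g
      simp only
      rw [Real.sq_sqrt ht2.le]
    have hf'ge : 1 ≤ |f' t| := by
      rw [hf']
      have hs : Real.sqrt (t ^ 2 - a ^ 2) ≤ t := by
        calc Real.sqrt (t ^ 2 - a ^ 2) ≤ Real.sqrt (t ^ 2) := by
              apply Real.sqrt_le_sqrt; nlinarith
          _ = t := Real.sqrt_sq ht0.le
      have hspos : 0 < Real.sqrt (t ^ 2 - a ^ 2) := Real.sqrt_pos.2 ht2
      rw [abs_of_nonneg (by positivity)]
      rw [le_div_iff₀ hspos]
      linarith
    have hge : g t = Real.exp (-a ^ 2 / 2) * g (f t) := by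
      rw [hgf]; unfold g
      rw [← Real.exp_add]
      congr 1; ring
    rw [hge, smul_eq_mul]
    have h1 : (0:ℝ) < Real.exp (-a ^ 2 / 2) := Real.exp_pos _
    have h2 : (0:ℝ) < g (f t) := Real.exp_pos _
    calc Real.exp (-a ^ 2 / 2) * g (f t)
        = Real.exp (-a ^ 2 / 2) * (1 * g (f t)) := by ring
      _ ≤ Real.exp (-a ^ 2 / 2) * (|f' t| * g (f t)) := by
          apply mul_le_mul_of_nonneg_left _ h1.le
          apply mul_le_mul_of_nonneg_right hf'ge h2.le
  calc ∫ t in a..b, g t = ∫ t in Set.Ioo a b, g t := by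
        rw [intervalIntegral.integral_of_le hab, MeasureTheory.integral_Ioc_eq_integral_Ioo]
    _ ≤ ∫ t in Set.Ioo a b, Real.exp (-a ^ 2 / 2) * (|f' t| • g (f t)) := by
        apply MeasureTheory.setIntegral_mono_on integrable_g.integrableOn
          (hpullint.const_mul _) measurableSet_Ioo hpt
    _ = Real.exp (-a ^ 2 / 2) * ∫ t in Set.Ioo a b, |f' t| • g (f t) := by
        rw [MeasureTheory.integral_const_mul]
    _ = Real.exp (-a ^ 2 / 2) * Ig c := by
        rw [← hchange]
        congr 1
        rw [Ig, intervalIntegral.integral_of_le hc0, MeasureTheory.integral_Ioc_eq_integral_Ioo]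

lemma lemC (c y : ℝ) (hc0 : 0 ≤ c) (hc1 : c ≤ 1) (hy : 0 ≤ y) :
    (∫ t in (c * y)..y, g t) ^ 2 ≤ π / 2 * (1 - c ^ 2) := by
  have hab : c * y ≤ y := by nlinarith
  have ha : 0 ≤ c * y := by positivity
  have hB := lemB (c * y) y ha hab
  have hint_nonneg : 0 ≤ ∫ t in (c * y)..y, g t :=
    intervalIntegral.integral_nonneg hab (fun t _ => g_nonneg t)
  have hIg_nonneg : 0 ≤ Ig (Real.sqrt (y ^ 2 - (c * y) ^ 2)) :=
    intervalIntegral.integral_nonneg (Real.sqrt_nonneg _) (fun t _ => g_nonneg t)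
  have hsq : (∫ t in (c * y)..y, g t) ^ 2 ≤
      (Real.exp (-(c * y) ^ 2 / 2)) ^ 2 * Ig (Real.sqrt (y ^ 2 - (c * y) ^ 2)) ^ 2 := by
    rw [← mul_pow]
    exact pow_le_pow_left₀ hint_nonneg hB 2
  have hX : 0 ≤ y ^ 2 - (c * y) ^ 2 := by nlinarith
  have hA := lemA (Real.sqrt (y ^ 2 - (c * y) ^ 2)) (Real.sqrt_nonneg _)
  rw [Real.sq_sqrt hX] at hA
  have hexp2 : (Real.exp (-(c * y) ^ 2 / 2)) ^ 2 = Real.exp (-(c * y) ^ 2) := by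
    rw [sq, ← Real.exp_add]
    congr 1; ring
  have hconv : Real.exp (-(c ^ 2 * y ^ 2)) ≤ c ^ 2 * Real.exp (-y ^ 2) + (1 - c ^ 2) := by
    have h := convexOn_exp.2 (Set.mem_univ (-y ^ 2)) (Set.mem_univ (0:ℝ))
      (by positivity : (0:ℝ) ≤ c ^ 2) (by nlinarith : (0:ℝ) ≤ 1 - c ^ 2) (by ring)
    simp only [smul_eq_mul, mul_zero, add_zero, Real.exp_zero, mul_one] at h
    have heq : -(c ^ 2 * y ^ 2) = c ^ 2 * -y ^ 2 := by ring
    rw [heq]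
    exact h
  have hcy : -(c * y) ^ 2 = -(c ^ 2 * y ^ 2) := by ring
  have hmain : (Real.exp (-(c * y) ^ 2)) * (π / 2 * (1 - Real.exp (-(y ^ 2 - (c * y) ^ 2)))) ≤
      π / 2 * (1 - c ^ 2) := by
    have hexpsub : Real.exp (-(c * y) ^ 2) * Real.exp (-(y ^ 2 - (c * y) ^ 2)) =
        Real.exp (-y ^ 2) := by
      rw [← Real.exp_add]; congr 1; ring
    have hpi := Real.pi_pos
    have he1 : Real.exp (-y ^ 2) ≤ 1 := Real.exp_le_one_iff.2 (neg_nonpos.2 (sq_nonneg y))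
    have he2 : 0 < Real.exp (-y ^ 2) := Real.exp_pos _
    have he3 : 0 < Real.exp (-(c * y) ^ 2) := Real.exp_pos _
    have he4 : Real.exp (-(c * y) ^ 2) ≤ c ^ 2 * Real.exp (-y ^ 2) + (1 - c ^ 2) := by
      rw [hcy]; exact hconv
    have h5 : Real.exp (-(c * y) ^ 2) * (π / 2 * (1 - Real.exp (-(y ^ 2 - (c * y) ^ 2)))) =
        π / 2 * (Real.exp (-(c * y) ^ 2) - Real.exp (-y ^ 2)) := by
      rw [← hexpsub]; ring
    have h6 : Real.exp (-(c * y) ^ 2) - Real.exp (-y ^ 2) ≤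
        (1 - c ^ 2) * (1 - Real.exp (-y ^ 2)) := by nlinarith [he4]
    have h7 : (1 - c ^ 2) * (1 - Real.exp (-y ^ 2)) ≤ 1 - c ^ 2 := by nlinarith [mul_nonneg (by nlinarith : (0:ℝ) ≤ 1 - c ^ 2) he2.le]
    rw [h5]
    have h8 : (0:ℝ) ≤ π / 2 := by linarith
    nlinarith [mul_le_mul_of_nonneg_left (h6.trans h7) h8]
  calc (∫ t in (c * y)..y, g t) ^ 2
      ≤ (Real.exp (-(c * y) ^ 2 / 2)) ^ 2 * Ig (Real.sqrt (y ^ 2 - (c * y) ^ 2)) ^ 2 := hsq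
    _ ≤ (Real.exp (-(c * y) ^ 2)) * (π / 2 * (1 - Real.exp (-(y ^ 2 - (c * y) ^ 2)))) := by
        rw [hexp2]
        exact mul_le_mul_of_nonneg_left hA (Real.exp_pos _).le
    _ ≤ π / 2 * (1 - c ^ 2) := hmain

lemma stdPhi_sub (u v : ℝ) (huv : u ≤ v) :
    stdPhi v - stdPhi u = (∫ t in u..v, g t) / Real.sqrt (2 * π) := by
  have hint : Integrable (fun t : ℝ => Real.exp (-t ^ 2 / 2) / Real.sqrt (2 * π)) :=
    integrable_g.div_const _
  have h := intervalIntegral.integral_Iic_sub_Iic (μ := volume)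
    (f := fun t : ℝ => Real.exp (-t ^ 2 / 2) / Real.sqrt (2 * π))
    (hint.integrableOn) (hint.integrableOn) (a := u) (b := v)
  unfold stdPhi
  rw [h, intervalIntegral.integral_div]; rfl

lemma sqrt_two_pi : Real.sqrt (2 * π) = 2 * Real.sqrt (π / 2) := by
  rw [show (2 : ℝ) * π = 4 * (π / 2) by ring, show (4 : ℝ) = 2 ^ 2 by norm_num,
    Real.sqrt_mul (by positivity), Real.sqrt_sq (by norm_num : (0:ℝ) ≤ 2)]

lemma main_bound (c y : ℝ) (hc0 : 0 ≤ c) (hc1 : c ≤ 1) :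
    |stdPhi y - stdPhi (y * c)| ≤ Real.sqrt (π / 2 * (1 - c ^ 2)) / Real.sqrt (2 * π) := by
  have hs2pi : 0 < Real.sqrt (2 * π) := Real.sqrt_pos.2 (by positivity)
  have hgeven : ∀ x : ℝ, g (-x) = g x := fun x => by unfold g; rw [neg_sq]
  rcases le_or_gt 0 y with hy | hy
  · have huv : y * c ≤ y := by nlinarith
    rw [stdPhi_sub (y * c) y huv]
    have hI0 : 0 ≤ ∫ t in (y * c)..y, g t :=
      intervalIntegral.integral_nonneg huv (fun t _ => g_nonneg t)
    rw [abs_div, abs_of_nonneg hI0, abs_of_nonneg hs2pi.le]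
    gcongr
    have hC := lemC c y hc0 hc1 hy
    rw [mul_comm c y] at hC
    calc (∫ t in (y * c)..y, g t) = Real.sqrt ((∫ t in (y * c)..y, g t) ^ 2) :=
          (Real.sqrt_sq hI0).symm
      _ ≤ Real.sqrt (π / 2 * (1 - c ^ 2)) := Real.sqrt_le_sqrt hC
  · have huv : y ≤ y * c := by nlinarith
    have h := stdPhi_sub y (y * c) huv
    have hrw : stdPhi y - stdPhi (y * c) = -((∫ t in y..(y * c), g t) / Real.sqrt (2 * π)) := by
      linarith
    rw [hrw, abs_neg]
    have hJ0 : 0 ≤ ∫ t in y..(y * c), g t :=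
      intervalIntegral.integral_nonneg huv (fun t _ => g_nonneg t)
    rw [abs_div, abs_of_nonneg hJ0, abs_of_nonneg hs2pi.le]
    gcongr
    have hJeq : (∫ t in y..(y * c), g t) = ∫ t in (c * -y)..(-y), g t := by
      calc (∫ t in y..(y * c), g t) = ∫ t in y..(y * c), g (-t) :=
            intervalIntegral.integral_congr (fun t _ => (hgeven t).symm)
        _ = ∫ t in (-(y * c))..(-y), g t := intervalIntegral.integral_comp_neg g
        _ = ∫ t in (c * -y)..(-y), g t := by rw [show -(y * c) = c * -y by ring]
    have hC := lemC c (-y) hc0 hc1 (by linarith)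
    rw [← hJeq] at hC
    calc (∫ t in y..(y * c), g t) = Real.sqrt ((∫ t in y..(y * c), g t) ^ 2) :=
          (Real.sqrt_sq hJ0).symm
      _ ≤ Real.sqrt (π / 2 * (1 - c ^ 2)) := Real.sqrt_le_sqrt hC

theorem stmt0 (ρ : ℝ) (hρ : -1 ≤ ρ ∧ ρ ≤ 1) (y : ℝ) :
    |stdPhi y - stdPhi (y * Real.sqrt (1 - ρ ^ 2))| ≤ |ρ| / 2 := by
  obtain ⟨hρ1, hρ2⟩ := hρ
  have h1ρ : 0 ≤ 1 - ρ ^ 2 := by nlinarith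
  set c := Real.sqrt (1 - ρ ^ 2) with hcdef
  have hc0 : 0 ≤ c := Real.sqrt_nonneg _
  have hc1 : c ≤ 1 := Real.sqrt_le_one.2 (by nlinarith)
  have hc2 : c ^ 2 = 1 - ρ ^ 2 := Real.sq_sqrt h1ρ
  have hb := main_bound c y hc0 hc1
  have heq : Real.sqrt (π / 2 * (1 - c ^ 2)) / Real.sqrt (2 * π) = |ρ| / 2 := by
    have h3 : 1 - c ^ 2 = ρ ^ 2 := by rw [hc2]; ring
    rw [h3, Real.sqrt_mul (by positivity) (ρ ^ 2), Real.sqrt_sq_eq_abs, sqrt_two_pi]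
    have hs : 0 < Real.sqrt (π / 2) := Real.sqrt_pos.2 (by positivity)
    field_simp
  rw [heq] at hb
  exact hb
end

section
/- If τ and ρ in [-1,1] satisfy sin(πτ/2) = 2·sin(πρ/6), then sgn(τ) = sgn(ρ) and (π/3)|ρ| ≤ (π/2)|τ| ≤ (π/2)|ρ|. -/
open Real

lemma key_nonneg (τ ρ : ℝ) (hτ0 : 0 ≤ τ) (hτ1 : τ ≤ 1) (hρ0 : 0 ≤ ρ) (hρ1 : ρ ≤ 1)
    (h : Real.sin (Real.pi * τ / 2) = 2 * Real.sin (Real.pi * ρ / 6)) :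
    (Real.pi / 3) * ρ ≤ (Real.pi / 2) * τ ∧ (Real.pi / 2) * τ ≤ (Real.pi / 2) * ρ := by
  have hπ := Real.pi_pos
  set x := Real.pi * τ / 2 with hx
  set y := Real.pi * ρ / 6 with hy
  have hx0 : 0 ≤ x := by positivity
  have hx2 : x ≤ Real.pi / 2 := by
    rw [hx]; nlinarith
  have hy0 : 0 ≤ y := by positivity
  have hy6 : y ≤ Real.pi / 6 := by rw [hy]; nlinarith
  have hsy0 : 0 ≤ Real.sin y := Real.sin_nonneg_of_nonneg_of_le_pi hy0 (by linarith)
  have hsyh : Real.sin y ≤ 1 / 2 := by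
    have := Real.strictMonoOn_sin.monotoneOn ⟨by linarith, by linarith⟩
      ⟨by linarith, by linarith⟩ hy6
    simpa [Real.sin_pi_div_six] using this
  constructor
  · -- 2y ≤ x
    have h1 : Real.sin (2 * y) ≤ Real.sin x := by
      rw [Real.sin_two_mul, h]
      have hc : Real.cos y ≤ 1 := Real.cos_le_one y
      nlinarith
    have := (Real.strictMonoOn_sin.le_iff_le (a := 2 * y) (b := x)
      ⟨by linarith, by linarith⟩ ⟨by linarith, by linarith⟩).mp h1
    nlinarith
  · -- x ≤ 3y
    have h1 : Real.sin x ≤ Real.sin (3 * y) := by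
      rw [Real.sin_three_mul, h]
      nlinarith [mul_nonneg hsy0 (by nlinarith : (0:ℝ) ≤ 1 - 4 * Real.sin y ^ 2)]
    have := (Real.strictMonoOn_sin.le_iff_le (a := x) (b := 3 * y)
      ⟨by linarith, by linarith⟩ ⟨by linarith, by linarith⟩).mp h1
    nlinarith

lemma sign_key (τ ρ : ℝ) (hτ : τ ∈ Set.Icc (-1 : ℝ) 1) (hρ : ρ ∈ Set.Icc (-1 : ℝ) 1)
    (h : Real.sin (Real.pi * τ / 2) = 2 * Real.sin (Real.pi * ρ / 6)) :
    (0 < τ ↔ 0 < ρ) ∧ (τ < 0 ↔ ρ < 0) := by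
  have hπ := Real.pi_pos
  obtain ⟨hτ1, hτ2⟩ := hτ
  obtain ⟨hρ1, hρ2⟩ := hρ
  have hxpos : 0 < τ → 0 < Real.sin (Real.pi * τ / 2) := fun ht =>
    Real.sin_pos_of_pos_of_lt_pi (by positivity) (by nlinarith)
  have hypos : 0 < ρ → 0 < Real.sin (Real.pi * ρ / 6) := fun ht =>
    Real.sin_pos_of_pos_of_lt_pi (by positivity) (by nlinarith)
  have hxneg : τ < 0 → Real.sin (Real.pi * τ / 2) < 0 := fun ht => by
    have : 0 < Real.sin (Real.pi * (-τ) / 2) :=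
      Real.sin_pos_of_pos_of_lt_pi (by nlinarith) (by nlinarith)
    have e : Real.pi * (-τ) / 2 = -(Real.pi * τ / 2) := by ring
    rw [e, Real.sin_neg] at this; linarith
  have hyneg : ρ < 0 → Real.sin (Real.pi * ρ / 6) < 0 := fun ht => by
    have : 0 < Real.sin (Real.pi * (-ρ) / 6) :=
      Real.sin_pos_of_pos_of_lt_pi (by nlinarith) (by nlinarith)
    have e : Real.pi * (-ρ) / 6 = -(Real.pi * ρ / 6) := by ring
    rw [e, Real.sin_neg] at this; linarith
  have hz2 : ∀ t : ℝ, t = 0 → Real.sin (Real.pi * t / 2) = 0 := by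
    intro t ht; rw [ht]; simp
  have hz6 : ∀ t : ℝ, t = 0 → Real.sin (Real.pi * t / 6) = 0 := by
    intro t ht; rw [ht]; simp
  constructor
  · constructor
    · intro ht
      have hs := hxpos ht
      rw [h] at hs
      by_contra hc
      push_neg at hc
      rcases eq_or_lt_of_le hc with he | hl
      · rw [hz6 ρ he] at hs; linarith
      · linarith [hyneg hl]
    · intro hr
      have hs := hypos hr
      by_contra hc
      push_neg at hc
      rcases eq_or_lt_of_le hc with he | hl
      · rw [hz2 τ he] at h; linarith
      · have := hxneg hl; rw [h] at this; linarith
  · constructor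
    · intro ht
      have hs := hxneg ht
      rw [h] at hs
      by_contra hc
      push_neg at hc
      rcases eq_or_lt_of_le hc with he | hl
      · rw [hz6 ρ he.symm] at hs; linarith
      · linarith [hypos hl]
    · intro hr
      have hs := hyneg hr
      by_contra hc
      push_neg at hc
      rcases eq_or_lt_of_le hc with he | hl
      · rw [hz2 τ he.symm] at h; linarith
      · have := hxpos hl; rw [h] at this; linarith

theorem stmt3 (τ ρ : ℝ) (hτ : τ ∈ Set.Icc (-1 : ℝ) 1) (hρ : ρ ∈ Set.Icc (-1 : ℝ) 1)
    (h : Real.sin (Real.pi * τ / 2) = 2 * Real.sin (Real.pi * ρ / 6)) :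
    Real.sign τ = Real.sign ρ ∧
      (Real.pi / 3) * |ρ| ≤ (Real.pi / 2) * |τ| ∧
      (Real.pi / 2) * |τ| ≤ (Real.pi / 2) * |ρ| := by
  obtain ⟨hpos, hneg⟩ := sign_key τ ρ hτ hρ h
  have hsign : Real.sign τ = Real.sign ρ := by
    rcases lt_trichotomy τ 0 with h1 | h1 | h1
    · rw [Real.sign_of_neg h1, Real.sign_of_neg (hneg.mp h1)]
    · have h2 : ρ = 0 := by
        by_contra hc
        rcases lt_or_gt_of_ne hc with hl | hl
        · exact absurd (hneg.mpr hl) (by simp [h1])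
        · exact absurd (hpos.mpr hl) (by simp [h1])
      rw [h1, h2]
    · rw [Real.sign_of_pos h1, Real.sign_of_pos (hpos.mp h1)]
  refine ⟨hsign, ?_⟩
  obtain ⟨hτ1, hτ2⟩ := hτ
  obtain ⟨hρ1, hρ2⟩ := hρ
  rcases le_or_gt 0 τ with ht | ht
  · have hr : 0 ≤ ρ := by
      by_contra hc
      push_neg at hc
      have := hneg.mpr hc
      linarith
    rw [abs_of_nonneg ht, abs_of_nonneg hr]
    exact key_nonneg τ ρ ht hτ2 hr hρ2 h
  · have hr : ρ < 0 := hneg.mp ht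
    have h' : Real.sin (Real.pi * (-τ) / 2) = 2 * Real.sin (Real.pi * (-ρ) / 6) := by
      have e1 : Real.pi * (-τ) / 2 = -(Real.pi * τ / 2) := by ring
      have e2 : Real.pi * (-ρ) / 6 = -(Real.pi * ρ / 6) := by ring
      rw [e1, e2, Real.sin_neg, Real.sin_neg, h]; ring
    rw [abs_of_neg ht, abs_of_neg hr]
    exact key_nonneg (-τ) (-ρ) (by linarith) (by linarith) (by linarith) (by linarith) h'
end
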